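/- Let (A,▷,◁,α,β) be a BiHom-L-dendriform superalgebra with α,β bijective. Then: (1) the product x∘y = x▷y − (−1)^{|x||y|}(α⁻¹β(y))◁(αβ⁻¹(x)) makes (A,∘,α,β) a BiHom-pre-Lie superalgebra (the associated vertical BiHom-pre-Lie superalgebra); (2) the product x•y = x▷y + x◁y makes (A,•,α,β) a BiHom-pre-Lie superalgebra (the associated horizontal BiHom-pre-Lie superalgebra). -/

import Mathlib

/-!
STATEMENT 10: If `(A,▷,◁,α,β)` is a BiHom-L-dendriform superalgebra with `α, β` bijective,
then `x∘y = x▷y − (−1)^{|x||y|}(α⁻¹β(y))◁(αβ⁻¹(x))` and `x•y = x▷y + x◁y` both make `A`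
into a BiHom-pre-Lie superalgebra (the associated vertical and horizontal BiHom-pre-Lie
superalgebras).
-/
lemma symm_preserves10
    (K A : Type) [Field K] [AddCommGroup A] [Module K A]
    (𝒜 : ZMod 2 → Submodule K A) (hA : DirectSum.IsInternal 𝒜)
    (f : A ≃ₗ[K] A) (hf : ∀ i : ZMod 2, ∀ a ∈ 𝒜 i, f a ∈ 𝒜 i) :
    ∀ i : ZMod 2, ∀ a ∈ 𝒜 i, f.symm a ∈ 𝒜 i := by
  rw [DirectSum.isInternal_submodule_iff_iSupIndep_and_iSup_eq_top] at hA
  obtain ⟨hind, hsup⟩ := hA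
  have htop : 𝒜 0 ⊔ 𝒜 1 = ⊤ := by
    rw [← hsup]
    apply le_antisymm
    · exact sup_le (le_iSup 𝒜 0) (le_iSup 𝒜 1)
    · apply iSup_le; intro i
      fin_cases i
      · exact le_sup_left
      · exact le_sup_right
  have hdisj : Disjoint (𝒜 0) (𝒜 1) := by
    have := hind (0 : ZMod 2)
    refine this.mono_right ?_
    exact le_iSup₂ (f := fun j _ => 𝒜 j) (1 : ZMod 2) (by decide)
  intro i a ha
  have : f.symm a ∈ (⊤ : Submodule K A) := trivial
  rw [← htop] at this
  obtain ⟨p, hp, q, hq, hpq⟩ := Submodule.mem_sup.mp this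
  have ha' : a = f p + f q := by
    have := congrArg f hpq
    simpa using this.symm
  fin_cases i
  · have h1 : f q = a - f p := by rw [ha']; abel
    have : f q ∈ 𝒜 0 ⊓ 𝒜 1 := ⟨h1 ▸ sub_mem ha (hf 0 p hp), hf 1 q hq⟩
    rw [hdisj.eq_bot] at this
    have hq0 : q = 0 := f.injective (by simpa using this)
    rw [← hpq, hq0, add_zero]; exact hp
  · have h1 : f p = a - f q := by rw [ha']; abel
    have : f p ∈ 𝒜 0 ⊓ 𝒜 1 := ⟨hf 0 p hp, h1 ▸ sub_mem ha (hf 1 q hq)⟩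
    rw [hdisj.eq_bot] at this
    have hp0 : p = 0 := f.injective (by simpa using this)
    rw [← hpq, hp0, zero_add]; exact hq

set_option maxHeartbeats 2000000

theorem statement10
    (K : Type) [Field K] [CharZero K]
    (A : Type) [AddCommGroup A] [Module K A]
    (𝒜 : ZMod 2 → Submodule K A)
    (hA : DirectSum.IsInternal 𝒜)
    (tr tl : A →ₗ[K] A →ₗ[K] A)
    (α β : A ≃ₗ[K] A)
    (hcomm : ∀ a, α (β a) = β (α a))
    (hαe : ∀ i : ZMod 2, ∀ a ∈ 𝒜 i, α a ∈ 𝒜 i)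
    (hβe : ∀ i : ZMod 2, ∀ a ∈ 𝒜 i, β a ∈ 𝒜 i)
    (htre : ∀ i j : ZMod 2, ∀ x ∈ 𝒜 i, ∀ y ∈ 𝒜 j, tr x y ∈ 𝒜 (i + j))
    (htle : ∀ i j : ZMod 2, ∀ x ∈ 𝒜 i, ∀ y ∈ 𝒜 j, tl x y ∈ 𝒜 (i + j))
    (hαtr : ∀ a b : A, α (tr a b) = tr (α a) (α b))
    (hαtl : ∀ a b : A, α (tl a b) = tl (α a) (α b))
    (hβtr : ∀ a b : A, β (tr a b) = tr (β a) (β b))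
    (hβtl : ∀ a b : A, β (tl a b) = tl (β a) (β b))
    -- BiHom-L-dendriform axioms
    (hax1 : ∀ i j k : ZMod 2, ∀ x ∈ 𝒜 i, ∀ y ∈ 𝒜 j, ∀ z ∈ 𝒜 k,
      tr (α (β x)) (tr (α y) z)
        = tr (tr (β x) (α y)) (β z) + tr (tl (β x) (α y)) (β z)
          + ((-1 : K) ^ (i.val * j.val)) • tr (α (β y)) (tr (α x) z)
          - ((-1 : K) ^ (i.val * j.val)) • tr (tl (β y) (α x)) (β z)
          - ((-1 : K) ^ (i.val * j.val)) • tr (tr (β y) (α x)) (β z))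
    (hax2 : ∀ i j k : ZMod 2, ∀ x ∈ 𝒜 i, ∀ y ∈ 𝒜 j, ∀ z ∈ 𝒜 k,
      tr (α (β x)) (tl (α y) z)
        = tl (tr (β x) (α y)) (β z)
          + ((-1 : K) ^ (i.val * j.val)) • tl (α (β y)) (tr (α x) z)
          + ((-1 : K) ^ (i.val * j.val)) • tl (α (β y)) (tl (α x) z)
          - ((-1 : K) ^ (i.val * j.val)) • tl (tl (β y) (α x)) (β z))
    -- the vertical product ∘ and the horizontal product •
    (m : ZMod 2 → ZMod 2 → A → A → A)
    (hm : ∀ i j x y, m i j x y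
      = tr x y - ((-1 : K) ^ (i.val * j.val)) • tl (α.symm (β y)) (α (β.symm x)))
    (b : A → A → A)
    (hb : ∀ x y, b x y = tr x y + tl x y) :
    -- (1) the vertical product makes `A` a BiHom-pre-Lie superalgebra:
    ((∀ i j : ZMod 2, ∀ x ∈ 𝒜 i, ∀ y ∈ 𝒜 j, m i j x y ∈ 𝒜 (i + j))
      ∧ (∀ i j : ZMod 2, ∀ x ∈ 𝒜 i, ∀ y ∈ 𝒜 j, α (m i j x y) = m i j (α x) (α y))
      ∧ (∀ i j : ZMod 2, ∀ x ∈ 𝒜 i, ∀ y ∈ 𝒜 j, β (m i j x y) = m i j (β x) (β y))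
      ∧ (∀ i j k : ZMod 2, ∀ x ∈ 𝒜 i, ∀ y ∈ 𝒜 j, ∀ z ∈ 𝒜 k,
          m (i + j) k (m i j (β x) (α y)) (β z)
            - m i (j + k) (α (β x)) (m j k (α y) z)
            = ((-1 : K) ^ (i.val * j.val)) •
                (m (j + i) k (m j i (β y) (α x)) (β z)
                  - m j (i + k) (α (β y)) (m i k (α x) z))))
    -- (2) the horizontal product makes `A` a BiHom-pre-Lie superalgebra:
    ∧ ((∀ i j : ZMod 2, ∀ x ∈ 𝒜 i, ∀ y ∈ 𝒜 j, b x y ∈ 𝒜 (i + j))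
      ∧ (∀ x y : A, α (b x y) = b (α x) (α y))
      ∧ (∀ x y : A, β (b x y) = b (β x) (β y))
      ∧ (∀ i j k : ZMod 2, ∀ x ∈ 𝒜 i, ∀ y ∈ 𝒜 j, ∀ z ∈ 𝒜 k,
          b (b (β x) (α y)) (β z) - b (α (β x)) (b (α y) z)
            = ((-1 : K) ^ (i.val * j.val)) •
                (b (b (β y) (α x)) (β z) - b (α (β y)) (b (α x) z)))) := by
  have hc2 : ∀ a, α.symm (β a) = β (α.symm a) := fun a =>
    α.injective (by simp [hcomm])
  have hc3 : ∀ a, α (β.symm a) = β.symm (α a) := fun a =>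
    β.injective (by simp [← hcomm])
  have hc4 : ∀ a, α.symm (β.symm a) = β.symm (α.symm a) := fun a =>
    α.injective (by rw [hc3]; simp)
  have hαstr : ∀ a c : A, α.symm (tr a c) = tr (α.symm a) (α.symm c) := fun a c =>
    α.injective (by simp [hαtr])
  have hαstl : ∀ a c : A, α.symm (tl a c) = tl (α.symm a) (α.symm c) := fun a c =>
    α.injective (by simp [hαtl])
  have hβstr : ∀ a c : A, β.symm (tr a c) = tr (β.symm a) (β.symm c) := fun a c =>
    β.injective (by simp [hβtr])
  have hβstl : ∀ a c : A, β.symm (tl a c) = tl (β.symm a) (β.symm c) := fun a c =>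
    β.injective (by simp [hβtl])
  have hαe' := symm_preserves10 K A 𝒜 hA α hαe
  have hβe' := symm_preserves10 K A 𝒜 hA β hβe
  refine ⟨⟨?_, ?_, ?_, ?_⟩, ?_, ?_, ?_, ?_⟩
  · -- membership for m
    intro i j x hx y hy
    rw [hm]
    refine sub_mem (htre i j x hx y hy) (Submodule.smul_mem _ _ ?_)
    have := htle j i _ (hαe' j _ (hβe j y hy)) _ (hαe i _ (hβe' i x hx))
    rwa [add_comm] at this
  · -- α multiplicative for m
    intro i j x _ y _
    simp [hm, map_sub, map_smul, hαtr, hαtl, hc2, hc3, hcomm]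
  · -- β multiplicative for m
    intro i j x _ y _
    simp [hm, map_sub, map_smul, hβtr, hβtl, hc2, hc3, hcomm]
  · -- pre-Lie axiom for m
    intro i j k x hx y hy z hz
    have hz2 : α.symm (α.symm (β z)) ∈ 𝒜 k := hαe' _ _ (hαe' _ _ (hβe _ _ hz))
    have hy2 : α (α (β.symm y)) ∈ 𝒜 j := hαe _ _ (hαe _ _ (hβe' _ _ hy))
    have hx2 : α (α (β.symm x)) ∈ 𝒜 i := hαe _ _ (hαe _ _ (hβe' _ _ hx))
    have hcase : ∀ c : ZMod 2, c = 0 ∨ c = 1 := by decide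
    have e00 : ((0:ZMod 2)+0) = 0 := by decide
    have e01 : ((0:ZMod 2)+1) = 1 := by decide
    have e10 : ((1:ZMod 2)+0) = 1 := by decide
    have e11 : ((1:ZMod 2)+1) = 0 := by decide
    have v0 : (0:ZMod 2).val = 0 := rfl
    have v1 : (1:ZMod 2).val = 1 := rfl
    rcases hcase i with rfl | rfl <;> rcases hcase j with rfl | rfl <;>
      rcases hcase k with rfl | rfl
    all_goals (
      have h1 := hax1 _ _ _ x hx y hy z hz
      have h2 := hax2 _ _ _ x hx _ hz2 _ hy2
      have h3 := hax2 _ _ _ y hy _ hz2 _ hx2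
      simp only [hm, map_sub, map_smul, map_neg, map_add, LinearMap.sub_apply,
        LinearMap.smul_apply, LinearMap.neg_apply, LinearMap.add_apply, neg_neg, smul_neg,
        LinearMap.map_sub, LinearMap.map_smul, hαtr, hαtl, hβtr, hβtl, hαstr, hαstl,
        hβstr, hβstl, hc2, hc3, hc4, hcomm, LinearEquiv.apply_symm_apply,
        LinearEquiv.symm_apply_apply, e00, e01, e10, e11, v0, v1,
        pow_zero, pow_one, one_smul,
        Nat.mul_zero, Nat.zero_mul, Nat.mul_one, Nat.one_mul, neg_smul] at h1 h2 h3 ⊢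
      first
      | linear_combination (norm := module) -h1 + h2 - h3
      | linear_combination (norm := module) -h1 - h2 - h3
      | linear_combination (norm := module) -h1 + h2 + h3)
  · -- membership for b
    intro i j x hx y hy
    rw [hb]
    exact add_mem (htre i j x hx y hy) (htle i j x hx y hy)
  · intro x y; simp [hb, hαtr, hαtl]
  · intro x y; simp [hb, hβtr, hβtl]
  · -- pre-Lie axiom for b
    intro i j k x hx y hy z hz
    have hcase : ∀ c : ZMod 2, c = 0 ∨ c = 1 := by decide
    have v0 : (0:ZMod 2).val = 0 := rfl
    have v1 : (1:ZMod 2).val = 1 := rfl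
    rcases hcase i with rfl | rfl <;> rcases hcase j with rfl | rfl <;>
      rcases hcase k with rfl | rfl
    all_goals (
      have h1 := hax1 _ _ _ x hx y hy z hz
      have h2 := hax2 _ _ _ x hx y hy z hz
      have h3 := hax2 _ _ _ y hy x hx z hz
      simp only [hb, map_add, LinearMap.add_apply, v0, v1, pow_zero, pow_one, one_smul,
        Nat.mul_zero, Nat.zero_mul, Nat.mul_one, Nat.one_mul, neg_smul] at h1 h2 h3 ⊢
      first
      | linear_combination (norm := module) -h1 - h2 + h3
      | linear_combination (norm := module) -h1 - h2 - h3)
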